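/- Let C be an (n,k,r,3)-SLRC over a finite field F, with 2 ≤ r < k. Then the code rate satisfies k/n ≤ (r/(r+1))², equivalently n ≥ k·(1 + 1/r)² = k(1 + 2/r + 1/r²). -/

import Mathlib

open Finset

/-- `R` is a recovering set of coordinate `i` for the linear code `C`. -/
def IsRecoveringSet {F : Type*} [Field F] {ι : Type*} [Fintype ι] [DecidableEq ι]
    (C : Submodule F (ι → F)) (i : ι) (R : Finset ι) : Prop :=
  i ∉ R ∧ ∃ a : ι → F, (∀ j ∈ R, a j ≠ 0) ∧ ∀ x ∈ C, x i = ∑ j ∈ R, a j * x j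

/-- `C` is an `(n,k,r,t)`-sequential locally repairable code. -/
def IsSLRC {F : Type*} [Field F] {ι : Type*} [Fintype ι] [DecidableEq ι]
    (C : Submodule F (ι → F)) (r t : ℕ) : Prop :=
  ∀ E : Finset ι, E.card ≤ t →
    ∃ L : List ι, L.Nodup ∧ L.toFinset = E ∧
      ∀ ℓ : Fin L.length, ∃ R : Finset ι,
        IsRecoveringSet C (L.get ℓ) R ∧ R.card ≤ r ∧
        R ⊆ Eᶜ ∪ (L.take ℓ.1).toFinset

namespace SLRCproof

open Module
open scoped Classical

variable {F : Type*} [Field F] {n r k : ℕ}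

/-- weight of a vector -/
noncomputable def wt (v : Fin n → F) : ℕ := (univ.filter (fun i => v i ≠ 0)).card

lemma exists_local_parity (C : Submodule F (Fin n → F)) (hC : IsSLRC C r 3)
    (E : Finset (Fin n)) (hE : E.card ≤ 3) (hne : E.Nonempty) :
    ∃ u ∈ E, ∃ v : Fin n → F, (∀ x ∈ C, ∑ i, v i * x i = 0) ∧ wt v ≤ r + 1 ∧
      v u ≠ 0 ∧ ∀ e ∈ E, e ≠ u → v e = 0 := by
  obtain ⟨L, hnd, hLE, h⟩ := hC E hE
  have hlen : 0 < L.length := by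
    rcases L with _ | ⟨a, L⟩
    · exfalso; rw [← hLE] at hne; simp at hne
    · simp
  obtain ⟨R, ⟨huR, a, ha0, hrel⟩, hRcard, hRsub⟩ := h ⟨0, hlen⟩
  set u := L.get ⟨0, hlen⟩ with hu
  have huE : u ∈ E := by rw [← hLE]; exact List.mem_toFinset.2 (L.get_mem _)
  have hRE : ∀ e ∈ E, e ∉ R := by
    intro e he heR
    have := hRsub heR
    simp only [List.take_zero, List.toFinset_nil, Finset.union_empty, Finset.mem_compl] at this
    exact this he
  refine ⟨u, huE, fun i => if i = u then 1 else if i ∈ R then -(a i) else 0, ?_, ?_, ?_, ?_⟩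
  · intro x hx
    have hsupp : ∀ i : Fin n, i ∉ insert u R →
        (if i = u then (1:F) else if i ∈ R then -(a i) else 0) * x i = 0 := by
      intro i hi
      simp only [Finset.mem_insert, not_or] at hi
      rw [if_neg hi.1, if_neg hi.2, zero_mul]
    rw [← Finset.sum_subset (Finset.subset_univ (insert u R)) (fun i _ hi => hsupp i hi)]
    rw [Finset.sum_insert huR, if_pos rfl, one_mul]
    have : ∀ i ∈ R, (if i = u then (1:F) else if i ∈ R then -(a i) else 0) * x i
        = -(a i * x i) := by
      intro i hi
      rw [if_neg (by rintro rfl; exact huR hi), if_pos hi, neg_mul]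
    rw [Finset.sum_congr rfl this, Finset.sum_neg_distrib, hrel x hx]
    ring
  · have : (univ.filter (fun i => (if i = u then (1:F) else if i ∈ R then -(a i) else 0) ≠ 0))
        ⊆ insert u R := by
      intro i hi
      simp only [Finset.mem_filter] at hi
      by_contra hni
      simp only [Finset.mem_insert, not_or] at hni
      exact hi.2 (by rw [if_neg hni.1, if_neg hni.2])
    calc wt _ ≤ (insert u R).card := Finset.card_le_card this
    _ ≤ R.card + 1 := Finset.card_insert_le _ _
    _ ≤ r + 1 := by omega
  · simp
  · intro e heE heu
    show (if e = u then (1:F) else if e ∈ R then -(a e) else 0) = 0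
    rw [if_neg heu, if_neg (hRE e heE)]

lemma card_le_of_annihilates (C : Submodule F (Fin n → F)) (hk : Module.finrank F C = k)
    (B : Finset (Fin n → F))
    (hli : LinearIndependent F (fun v : (B : Set (Fin n → F)) => (v : Fin n → F)))
    (hann : ∀ v ∈ B, ∀ x ∈ C, ∑ i, v i * x i = 0) :
    k + B.card ≤ n := by
  classical
  set e := (Pi.basisFun F (Fin n)).toDualEquiv with he
  have hspan_le : Submodule.span F (B : Set (Fin n → F)) ≤
      (Submodule.dualAnnihilator C).comap (e : (Fin n → F) →ₗ[F] Module.Dual F (Fin n → F)) := by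
    rw [Submodule.span_le]
    intro v hv
    simp only [SetLike.mem_coe, Submodule.mem_comap, Submodule.mem_dualAnnihilator]
    intro x hx
    have hx' : (x : Fin n → F) = ∑ i, x i • (Pi.basisFun F (Fin n)) i := by
      have := ((Pi.basisFun F (Fin n)).sum_repr x).symm
      simpa only [Pi.basisFun_repr] using this
    have : e v x = ∑ i, x i * v i := by
      conv_lhs => rw [hx']
      rw [map_sum]
      refine Finset.sum_congr rfl fun i _ => ?_
      rw [map_smul, Basis.toDualEquiv_apply, Basis.toDual_apply_left, Pi.basisFun_repr,
        smul_eq_mul]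
    rw [LinearEquiv.coe_coe, this]
    rw [Finset.sum_congr rfl fun i _ => mul_comm (x i) (v i)]
    exact hann v hv x hx
  have h1 : B.card = finrank F (Submodule.span F (B : Set (Fin n → F))) :=
    (finrank_span_finset_eq_card hli).symm
  have h2 : finrank F ((Submodule.dualAnnihilator C).comap
      (e : (Fin n → F) →ₗ[F] Module.Dual F (Fin n → F)))
      = finrank F (Submodule.dualAnnihilator C) := by
    rw [Submodule.comap_equiv_eq_map_symm]
    exact LinearEquiv.finrank_map_eq _ _
  have h3 : finrank F (Submodule.dualAnnihilator C) + k = n := by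
    have := LinearEquiv.finrank_eq (R := F) (M := (Fin n → F) ⧸ C)
      (N := ↥(Submodule.dualAnnihilator C)) (Subspace.quotEquivAnnihilator C)
    rw [← this]
    have h5 := Submodule.finrank_quotient_add_finrank C
    rw [hk] at h5
    have h6 : finrank F (Fin n → F) = n := by
      rw [Module.finrank_fintype_fun_eq_card]; simp
    omega
  have h4 : finrank F (Submodule.span F (B : Set (Fin n → F))) ≤
      finrank F ((Submodule.dualAnnihilator C).comap
      (e : (Fin n → F) →ₗ[F] Module.Dual F (Fin n → F))) :=
    Submodule.finrank_mono hspan_le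
  omega

-- abstract combinatorial core
lemma main_count
    (B : Finset (Fin n → F))
    (hwt : ∀ w ∈ B, wt w ≤ r + 1)
    (hr : 1 ≤ r)
    (hparity : ∀ E : Finset (Fin n), E.card ≤ 3 → E.Nonempty →
      ∃ u ∈ E, ∃ v : Fin n → F, v ∈ Submodule.span F (B : Set (Fin n → F)) ∧ v u ≠ 0 ∧
        ∀ e ∈ E, e ≠ u → v e = 0) :
    (2 * r + 1) * n ≤ (r + 1) ^ 2 * B.card := by
  classical
  set cov : Fin n → ℕ := fun i => (B.filter (fun w => w i ≠ 0)).card with hcov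
  -- every coordinate is covered
  have F0 : ∀ i : Fin n, ∃ w ∈ B, w i ≠ 0 := by
    intro i
    obtain ⟨u, hu, v, hvspan, hvu, -⟩ := hparity {i} (by simp) ⟨i, by simp⟩
    simp only [Finset.mem_singleton] at hu
    subst hu
    by_contra hno
    push_neg at hno
    have : Submodule.span F (B : Set (Fin n → F)) ≤ LinearMap.ker (LinearMap.proj u) := by
      rw [Submodule.span_le]
      intro w hw
      simp only [SetLike.mem_coe, LinearMap.mem_ker, LinearMap.proj_apply]
      exact hno w hw
    exact hvu (this hvspan)
  have covpos : ∀ i, 1 ≤ cov i := by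
    intro i
    obtain ⟨w, hwB, hwi⟩ := F0 i
    exact Finset.card_pos.2 ⟨w, Finset.mem_filter.2 ⟨hwB, hwi⟩⟩
  -- owner function
  set ow : Fin n → (Fin n → F) := fun i => (F0 i).choose with how
  have howB : ∀ i, ow i ∈ B := fun i => (F0 i).choose_spec.1
  have howi : ∀ i, ow i i ≠ 0 := fun i => (F0 i).choose_spec.2
  have howuniq : ∀ i, cov i = 1 → ∀ w ∈ B, w i ≠ 0 → w = ow i := by
    intro i hc w hwB hwi
    have h1 : w ∈ B.filter (fun w => w i ≠ 0) := Finset.mem_filter.2 ⟨hwB, hwi⟩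
    have h2 : ow i ∈ B.filter (fun w => w i ≠ 0) := Finset.mem_filter.2 ⟨howB i, howi i⟩
    obtain ⟨w0, hw0⟩ := Finset.card_eq_one.1 hc
    rw [hw0, Finset.mem_singleton] at h1 h2
    rw [h1, h2]
  -- evaluation of span elements at singly-covered coordinates
  have SC : ∀ q : Fin n, cov q = 1 → ∀ g : (Fin n → F) → F,
      (∑ w ∈ B, g w • w) q = g (ow q) * (ow q) q := by
    intro q hq g
    rw [Finset.sum_apply]
    rw [Finset.sum_eq_single (ow q)]
    · simp [smul_eq_mul]
    · intro w hwB hwne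
      have : w q = 0 := by
        by_contra h0
        exact hwne (howuniq q hq w hwB h0)
      simp [this]
    · intro h; exact absurd (howB q) h
  -- evaluation at doubly-covered coordinates
  have TC : ∀ c : Fin n, ∀ w w' : Fin n → F, w ≠ w' → w ∈ B → w' ∈ B →
      w c ≠ 0 → w' c ≠ 0 → cov c = 2 → ∀ g : (Fin n → F) → F,
      (∑ w'' ∈ B, g w'' • w'') c = g w * w c + g w' * w' c := by
    intro c w w' hne hwB hw'B hwc hw'c hc g
    have hsub : ({w, w'} : Finset (Fin n → F)) ⊆ B.filter (fun u => u c ≠ 0) := by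
      intro u hu
      rcases Finset.mem_insert.1 hu with h | h
      · subst h; exact Finset.mem_filter.2 ⟨hwB, hwc⟩
      · rw [Finset.mem_singleton] at h; subst h; exact Finset.mem_filter.2 ⟨hw'B, hw'c⟩
    have hcard : ({w, w'} : Finset (Fin n → F)).card = 2 := Finset.card_pair hne
    have heq : B.filter (fun u => u c ≠ 0) = {w, w'} :=
      (Finset.eq_of_subset_of_card_le hsub (by rw [hcard]; exact le_of_eq hc)).symm
    rw [Finset.sum_apply]
    have : ∑ w'' ∈ B, (g w'' • w'') c = ∑ w'' ∈ B.filter (fun u => u c ≠ 0), (g w'' • w'') c := by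
      refine (Finset.sum_subset (Finset.filter_subset _ _) ?_).symm
      intro u huB hu
      simp only [Finset.mem_filter, not_and, not_not] at hu
      simp [hu huB]
    rw [this, heq, Finset.sum_pair hne]
    simp [smul_eq_mul]
  -- getting representations
  have rep : ∀ v : Fin n → F, v ∈ Submodule.span F (B : Set (Fin n → F)) →
      ∃ g : (Fin n → F) → F, (∑ w ∈ B, g w • w) = v := by
    intro v hv
    obtain ⟨g, -, hg⟩ := Submodule.mem_span_finset.1 hv
    exact ⟨g, hg⟩
  -- KC1 : distinct singly-covered coordinates have distinct owners
  have KC1 : ∀ j j' : Fin n, cov j = 1 → cov j' = 1 → j ≠ j' → ow j = ow j' → False := by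
    intro j j' hj hj' hne heq
    obtain ⟨u, hu, v, hvspan, hvu, hvrest⟩ := hparity {j, j'}
      (by rw [Finset.card_insert_of_notMem (by simpa using hne)]; simp) ⟨j, by simp⟩
    obtain ⟨g, hg⟩ := rep v hvspan
    have key : ∀ p q : Fin n, cov p = 1 → cov q = 1 → ow p = ow q →
        v p ≠ 0 → v q = 0 → False := by
      intro p q hp hq hpq hvp hvq
      rw [← hg] at hvp hvq
      rw [SC q hq g] at hvq
      have hgq : g (ow q) = 0 := by
        rcases mul_eq_zero.1 hvq with h | h
        · exact h
        · exact absurd h (howi q)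
      rw [SC p hp g, hpq, hgq, zero_mul] at hvp
      exact hvp rfl
    rcases Finset.mem_insert.1 hu with h | h
    · subst h
      exact key u j' hj hj' heq hvu (hvrest j' (by simp) (Ne.symm hne))
    · rw [Finset.mem_singleton] at h; subst h
      exact key u j hj' hj heq.symm hvu (hvrest j (by simp) hne)
  -- KC2 : two owners cannot doubly cover a coordinate
  have KC2 : ∀ j j' c : Fin n, cov j = 1 → cov j' = 1 → j ≠ j' → cov c = 2 →
      ow j c ≠ 0 → ow j' c ≠ 0 → False := by
    intro j j' c hj hj' hne hc hojc hoj'c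
    have hcj : c ≠ j := by intro h; rw [h, hj] at hc; omega
    have hcj' : c ≠ j' := by intro h; rw [h, hj'] at hc; omega
    have hww' : ow j ≠ ow j' := fun h => KC1 j j' hj hj' hne h
    have hcard3 : ({j, j', c} : Finset (Fin n)).card ≤ 3 := by
      refine le_trans (Finset.card_insert_le _ _) ?_
      have : ({j', c} : Finset (Fin n)).card ≤ 2 := le_trans (Finset.card_insert_le _ _) (by simp)
      omega
    obtain ⟨u, hu, v, hvspan, hvu, hvrest⟩ := hparity {j, j', c} hcard3 ⟨j, by simp⟩
    obtain ⟨g, hg⟩ := rep v hvspan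
    have evc : v c = g (ow j) * (ow j) c + g (ow j') * (ow j') c := by
      rw [← hg]; exact TC c (ow j) (ow j') hww' (howB j) (howB j') hojc hoj'c hc g
    have evj : v j = g (ow j) * (ow j) j := by rw [← hg]; exact SC j hj g
    have evj' : v j' = g (ow j') * (ow j') j' := by rw [← hg]; exact SC j' hj' g
    have gzero : ∀ p : Fin n, cov p = 1 → v p = 0 → g (ow p) = 0 := by
      intro p hp hvp
      rw [← hg, SC p hp g] at hvp
      rcases mul_eq_zero.1 hvp with h | h
      · exact h
      · exact absurd h (howi p)
    rcases Finset.mem_insert.1 hu with h | h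
    · -- u = j
      subst h
      have h1 : g (ow j') = 0 := gzero j' hj' (hvrest j' (by simp) (Ne.symm hne))
      have h2 : g (ow u) ≠ 0 := by
        intro h0
        rw [evj, h0, zero_mul] at hvu
        exact hvu rfl
      have h3 : v c = 0 := hvrest c (by simp) hcj
      rw [evc, h1, zero_mul, add_zero] at h3
      exact (mul_ne_zero h2 hojc) h3
    rcases Finset.mem_insert.1 h with h' | h'
    · -- u = j'
      subst h'
      have h1 : g (ow j) = 0 := gzero j hj (hvrest j (by simp) hne)
      have h2 : g (ow u) ≠ 0 := by
        intro h0
        rw [evj', h0, zero_mul] at hvu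
        exact hvu rfl
      have h3 : v c = 0 := hvrest c (by simp) hcj'
      rw [evc, h1, zero_mul, zero_add] at h3
      exact (mul_ne_zero h2 hoj'c) h3
    · -- u = c
      rw [Finset.mem_singleton] at h'; subst h'
      have h1 : g (ow j) = 0 := gzero j hj (hvrest j (by simp) (Ne.symm hcj))
      have h2 : g (ow j') = 0 := gzero j' hj' (hvrest j' (by simp) (Ne.symm hcj'))
      rw [evc, h1, h2, zero_mul, zero_mul, add_zero] at hvu
      exact hvu rfl
  -- THE COUNTING
  set J : Finset (Fin n) := univ.filter (fun i => cov i = 1) with hJ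
  set S1 : ℕ := ∑ w ∈ B, (r + 1 - wt w) with hS1
  set S2 : ℕ := ∑ i ∈ univ.filter (fun i => ¬ cov i = 1), (cov i - 2) with hS2
  set Jc : Finset (Fin n) := J.filter (fun j => wt (ow j) ≤ r) with hJc
  set Js : Finset (Fin n) := J.filter (fun j => ¬ wt (ow j) ≤ r) with hJs
  have hJmem : ∀ j, j ∈ J ↔ cov j = 1 := by intro j; simp [hJ]
  -- double counting
  have e1 : ∑ w ∈ B, wt w = ∑ i : Fin n, cov i := by
    have h1 : ∀ w : Fin n → F, wt w = ∑ i : Fin n, if w i ≠ 0 then 1 else 0 := by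
      intro w; rw [Finset.sum_boole]; rfl
    have h2 : ∀ i : Fin n, cov i = ∑ w ∈ B, if w i ≠ 0 then 1 else 0 := by
      intro i; rw [Finset.sum_boole]; rfl
    calc ∑ w ∈ B, wt w = ∑ w ∈ B, ∑ i : Fin n, if w i ≠ 0 then 1 else 0 :=
          Finset.sum_congr rfl fun w _ => h1 w
      _ = ∑ i : Fin n, ∑ w ∈ B, if w i ≠ 0 then 1 else 0 := Finset.sum_comm
      _ = ∑ i : Fin n, cov i := Finset.sum_congr rfl fun i _ => (h2 i).symm
  have e3 : (∑ i : Fin n, cov i) + S1 = (r + 1) * B.card := by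
    rw [← e1, hS1, ← Finset.sum_add_distrib]
    have : ∀ w ∈ B, wt w + (r + 1 - wt w) = r + 1 := by
      intro w hw; have := hwt w hw; omega
    rw [Finset.sum_congr rfl this, Finset.sum_const, smul_eq_mul, mul_comm]
  have e4 : (∑ i : Fin n, cov i) + J.card = 2 * n + S2 := by
    have hsplit : ∑ i ∈ J, cov i + ∑ i ∈ univ.filter (fun i => ¬ cov i = 1), cov i
        = ∑ i : Fin n, cov i := Finset.sum_filter_add_sum_filter_not univ _ cov
    have hJsum : ∑ i ∈ J, cov i = J.card := by
      rw [Finset.sum_congr rfl (fun i hi => (hJmem i).1 hi), Finset.sum_const, smul_eq_mul,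
        mul_one]
    have hNsum : ∑ i ∈ univ.filter (fun i => ¬ cov i = 1), cov i
        = 2 * (univ.filter (fun i => ¬ cov i = 1)).card + S2 := by
      have hcongr : ∀ i ∈ univ.filter (fun i => ¬ cov i = 1), cov i = 2 + (cov i - 2) := by
        intro i hi
        have h1 : ¬ cov i = 1 := (Finset.mem_filter.1 hi).2
        have h2 := covpos i
        omega
      rw [Finset.sum_congr rfl hcongr, Finset.sum_add_distrib, Finset.sum_const, smul_eq_mul]
      omega
    have hcards : J.card + (univ.filter (fun i => ¬ cov i = 1)).card = n := by
      have := Finset.card_filter_add_card_filter_not (s := univ)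
        (p := fun i : Fin n => cov i = 1)
      simpa using this
    omega
  have esplit : Jc.card + Js.card = J.card :=
    Finset.card_filter_add_card_filter_not (s := J) (p := fun j => wt (ow j) ≤ r)
  have e5 : Jc.card ≤ S1 := by
    have hinj : Set.InjOn ow (Jc : Set (Fin n)) := by
      intro a ha b hb hab
      by_contra hne
      exact KC1 a b ((hJmem a).1 (Finset.mem_of_mem_filter a ha))
        ((hJmem b).1 (Finset.mem_of_mem_filter b hb)) hne hab
    have himg : Jc.image ow ⊆ B := by
      intro w hw
      obtain ⟨j, hj, rfl⟩ := Finset.mem_image.1 hw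
      exact howB j
    have h1 : Jc.card = (Jc.image ow).card := (Finset.card_image_of_injOn hinj).symm
    have h2 : (Jc.image ow).card ≤ ∑ w ∈ Jc.image ow, (r + 1 - wt w) := by
      have h4 : (Jc.image ow).card • 1 ≤ ∑ w ∈ Jc.image ow, (r + 1 - wt w) := by
        refine Finset.card_nsmul_le_sum _ _ _ ?_
        intro w hw
        obtain ⟨j, hj, rfl⟩ := Finset.mem_image.1 hw
        have : wt (ow j) ≤ r := (Finset.mem_filter.1 hj).2
        omega
      simpa using h4
    have h3 : ∑ w ∈ Jc.image ow, (r + 1 - wt w) ≤ S1 := by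
      rw [hS1]
      exact Finset.sum_le_sum_of_subset himg
    omega
  have e6 : (r + 1) * Js.card ≤ n + (r + 1) * S2 := by
    set dstar : Fin n → ℕ := fun i => (Js.filter (fun j => ow j i ≠ 0)).card with hdstar
    have hfull : ∀ j ∈ Js, wt (ow j) = r + 1 := by
      intro j hj
      have h1 := hwt (ow j) (howB j)
      have h2 : ¬ wt (ow j) ≤ r := (Finset.mem_filter.1 hj).2
      omega
    have hdouble : (r + 1) * Js.card = ∑ i : Fin n, dstar i := by
      have h1 : (r + 1) * Js.card = ∑ j ∈ Js, wt (ow j) := by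
        rw [Finset.sum_congr rfl hfull, Finset.sum_const, smul_eq_mul, mul_comm]
      rw [h1]
      have h2 : ∀ j : Fin n, wt (ow j) = ∑ i : Fin n, if ow j i ≠ 0 then 1 else 0 := by
        intro j; rw [Finset.sum_boole]; rfl
      have h3 : ∀ i : Fin n, dstar i = ∑ j ∈ Js, if ow j i ≠ 0 then 1 else 0 := by
        intro i; rw [Finset.sum_boole]; rfl
      calc ∑ j ∈ Js, wt (ow j) = ∑ j ∈ Js, ∑ i : Fin n, if ow j i ≠ 0 then 1 else 0 :=
            Finset.sum_congr rfl fun j _ => h2 j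
        _ = ∑ i : Fin n, ∑ j ∈ Js, if ow j i ≠ 0 then 1 else 0 := Finset.sum_comm
        _ = ∑ i : Fin n, dstar i := Finset.sum_congr rfl fun i _ => (h3 i).symm
    have hpw : ∀ i : Fin n, dstar i ≤ 1 + (if ¬ cov i = 1 then (r+1) * (cov i - 2) else 0) := by
      intro i
      by_cases hci : cov i = 1
      · rw [if_neg (by simpa using hci)]
        have : dstar i ≤ 1 := by
          rw [hdstar]
          refine Finset.card_le_one.2 ?_
          intro a ha b hb
          have haJ : cov a = 1 := (hJmem a).1 (Finset.mem_of_mem_filter a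
            (Finset.mem_of_mem_filter a ha))
          have hbJ : cov b = 1 := (hJmem b).1 (Finset.mem_of_mem_filter b
            (Finset.mem_of_mem_filter b hb))
          have hai : ow a = ow i := howuniq i hci (ow a) (howB a) (Finset.mem_filter.1 ha).2
          have hbi : ow b = ow i := howuniq i hci (ow b) (howB b) (Finset.mem_filter.1 hb).2
          by_contra hne
          exact KC1 a b haJ hbJ hne (hai.trans hbi.symm)
        omega
      · rw [if_pos (by simpa using hci)]
        by_cases hd : dstar i ≤ 1
        · omega
        · have h2 : 2 ≤ dstar i := by omega
          obtain ⟨a, ha, b, hb, hab⟩ := Finset.one_lt_card.1 (by omega : 1 < dstar i)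
          have haJ : cov a = 1 := (hJmem a).1 (Finset.mem_of_mem_filter a
            (Finset.mem_of_mem_filter a ha))
          have hbJ : cov b = 1 := (hJmem b).1 (Finset.mem_of_mem_filter b
            (Finset.mem_of_mem_filter b hb))
          have hcov3 : 3 ≤ cov i := by
            have h1 := covpos i
            rcases Nat.lt_or_ge (cov i) 3 with h | h
            · have hc2 : cov i = 2 := by omega
              exact absurd (KC2 a b i haJ hbJ hab hc2
                  (Finset.mem_filter.1 ha).2 (Finset.mem_filter.1 hb).2) (by simp)
            · exact h
          have hdcov : dstar i ≤ cov i := by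
            rw [hdstar, hcov]
            refine Finset.card_le_card_of_injOn ow ?_ ?_
            · intro j hj
              exact Finset.mem_filter.2 ⟨howB j, (Finset.mem_filter.1 hj).2⟩
            · intro x hx y hy hxy
              by_contra hne
              exact KC1 x y ((hJmem x).1 (Finset.mem_of_mem_filter x
                (Finset.mem_of_mem_filter x hx)))
                ((hJmem y).1 (Finset.mem_of_mem_filter y (Finset.mem_of_mem_filter y hy)))
                hne hxy
          have hmul : 2 * (cov i - 2) ≤ (r + 1) * (cov i - 2) :=
            Nat.mul_le_mul_right _ (by omega)
          omega
    have hsum : ∑ i : Fin n, (1 + (if ¬ cov i = 1 then (r+1) * (cov i - 2) else 0))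
        = n + (r + 1) * S2 := by
      rw [Finset.sum_add_distrib, Finset.sum_const, smul_eq_mul, mul_one]
      congr 1
      · simp
      · rw [hS2, Finset.mul_sum, ← Finset.sum_filter]
    calc (r + 1) * Js.card = ∑ i : Fin n, dstar i := hdouble
      _ ≤ ∑ i : Fin n, (1 + (if ¬ cov i = 1 then (r+1) * (cov i - 2) else 0)) :=
          Finset.sum_le_sum fun i _ => hpw i
      _ = n + (r + 1) * S2 := hsum
  -- final assembly
  have m1 : (r+1) * (∑ i : Fin n, cov i) + (r+1) * J.card = 2*(r+1)*n + (r+1)*S2 := by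
    rw [← Nat.mul_add, e4]; ring
  have m2 : (r+1) * Jc.card ≤ (r+1) * S1 := Nat.mul_le_mul_left _ e5
  have m3 : (r+1) * ((∑ i : Fin n, cov i) + S1) = (r+1)^2 * B.card := by
    rw [e3]; ring
  have mJ : (r+1) * J.card = (r+1) * Jc.card + (r+1) * Js.card := by
    rw [← Nat.mul_add, esplit]
  have big : 2*(r+1)*n + (r+1)*S2 ≤ (r+1)^2 * B.card + n + (r+1)*S2 := by
    calc 2*(r+1)*n + (r+1)*S2 = (r+1) * (∑ i : Fin n, cov i) + (r+1) * J.card := m1.symm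
      _ = (r+1) * (∑ i : Fin n, cov i) + ((r+1) * Jc.card + (r+1) * Js.card) := by rw [mJ]
      _ ≤ (r+1) * (∑ i : Fin n, cov i) + ((r+1) * S1 + (n + (r+1) * S2)) := by
          exact Nat.add_le_add_left (Nat.add_le_add m2 e6) _
      _ = (r+1) * ((∑ i : Fin n, cov i) + S1) + n + (r+1) * S2 := by ring
      _ = (r+1)^2 * B.card + n + (r+1)*S2 := by rw [m3]
  have big2 : 2*(r+1)*n ≤ (r+1)^2 * B.card + n := by omega
  have : (2*r+1)*n + n = 2*(r+1)*n := by ring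
  omega

end SLRCproof

/-- Theorem 1: the rate of an `(n,k,r,3)`-SLRC satisfies `k/n ≤ (r/(r+1))²`,
equivalently `n ≥ k·(1 + 1/r)²`. -/
theorem rate_bound_t3 {F : Type*} [Field F] [Fintype F] {n k r : ℕ}
    (C : Submodule F (Fin n → F)) (hk : Module.finrank F C = k)
    (hr2 : 2 ≤ r) (hrk : r < k) (hC : IsSLRC C r 3) :
    (k : ℝ) / n ≤ ((r : ℝ) / (r + 1)) ^ 2 ∧ (k : ℝ) * (1 + 1 / r) ^ 2 ≤ n := by
  classical
  -- low-weight annihilator vectors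
  set S : Set (Fin n → F) :=
    {v | (∀ x ∈ C, ∑ i, v i * x i = 0) ∧ SLRCproof.wt v ≤ r + 1} with hS
  obtain ⟨b, hbS, hbspan, hbli⟩ := exists_linearIndependent F S
  have hbfin : b.Finite := hbli.setFinite
  set B : Finset (Fin n → F) := hbfin.toFinset with hB
  have hBb : (B : Set (Fin n → F)) = b := hbfin.coe_toFinset
  have hwt : ∀ w ∈ B, SLRCproof.wt w ≤ r + 1 := by
    intro w hw
    have : w ∈ b := by rwa [hB, Set.Finite.mem_toFinset] at hw
    exact (hbS this).2
  have hann : ∀ v ∈ B, ∀ x ∈ C, ∑ i, v i * x i = 0 := by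
    intro v hv
    have : v ∈ b := by rwa [hB, Set.Finite.mem_toFinset] at hv
    exact (hbS this).1
  have hli : LinearIndependent F (fun v : (B : Set (Fin n → F)) => (v : Fin n → F)) := by
    rw [hBb]; exact hbli
  have hparity : ∀ E : Finset (Fin n), E.card ≤ 3 → E.Nonempty →
      ∃ u ∈ E, ∃ v : Fin n → F, v ∈ Submodule.span F (B : Set (Fin n → F)) ∧ v u ≠ 0 ∧
        ∀ e ∈ E, e ≠ u → v e = 0 := by
    intro E hE hne
    obtain ⟨u, hu, v, h1, h2, h3, h4⟩ := SLRCproof.exists_local_parity C hC E hE hne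
    refine ⟨u, hu, v, ?_, h3, h4⟩
    rw [hBb, hbspan]
    exact Submodule.subset_span (by exact ⟨h1, h2⟩)
  have hmain : (2 * r + 1) * n ≤ (r + 1) ^ 2 * B.card :=
    SLRCproof.main_count B hwt (by omega) hparity
  have hcard : k + B.card ≤ n := SLRCproof.card_le_of_annihilates C hk B hli hann
  -- natural-number inequality (r+1)^2 * k ≤ r^2 * n
  have hnat : (r + 1) ^ 2 * k ≤ r ^ 2 * n := by
    have h1 : (r+1)^2 * k + (2*r+1) * n ≤ (r+1)^2 * k + (r+1)^2 * B.card :=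
      Nat.add_le_add_left hmain _
    have h2 : (r+1)^2 * k + (r+1)^2 * B.card = (r+1)^2 * (k + B.card) := by ring
    have h3 : (r+1)^2 * (k + B.card) ≤ (r+1)^2 * n := Nat.mul_le_mul_left _ hcard
    have h4 : (r+1)^2 * n = r^2 * n + (2*r+1) * n := by ring
    omega
  -- pass to the reals
  have hkn : k ≤ n := by omega
  have hk3 : 3 ≤ k := by omega
  have hn0 : (0:ℝ) < n := by
    have : 3 ≤ n := by omega
    exact_mod_cast by omega
  have hr0 : (0:ℝ) < r := by exact_mod_cast by omega
  have hr10 : (0:ℝ) < (r:ℝ) + 1 := by linarith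
  have hreal : ((r:ℝ) + 1) ^ 2 * k ≤ (r:ℝ) ^ 2 * n := by exact_mod_cast hnat
  constructor
  · rw [div_pow, div_le_div_iff₀ hn0 (by positivity)]
    nlinarith
  · have h1r : (1:ℝ) + 1 / r = ((r:ℝ) + 1) / r := by field_simp
    rw [h1r, div_pow, ← mul_div_assoc, div_le_iff₀ (by positivity : (0:ℝ) < ((r:ℝ))^2)]
    nlinarith
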